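/- If T₁ and T₂ are commuting contractions on a complex Hilbert space, then the asymptotic limit of their product satisfies A_{T₁T₂} ≤ A_{T₁} and A_{T₁T₂} ≤ A_{T₂} in the positive operator order. -/

import Mathlib

open Filter Topology ContinuousLinearMap

local notation "⟪" x ", " y "⟫" => @inner ℂ _ _ x y

lemma aux_pow_norm {H : Type*} [NormedAddCommGroup H] [InnerProductSpace ℂ H]
    (T : H →L[ℂ] H) (hT : ‖T‖ ≤ 1) (n : ℕ) (x : H) : ‖(T ^ n) x‖ ≤ ‖x‖ := by
  induction n with
  | zero => simp
  | succ n ih =>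
    have h : ((T ^ (n + 1)) x) = T ((T ^ n) x) := by rw [pow_succ']; rfl
    rw [h]
    calc ‖T ((T ^ n) x)‖ ≤ ‖T‖ * ‖(T ^ n) x‖ := T.le_opNorm _
      _ ≤ 1 * ‖x‖ := mul_le_mul hT ih (norm_nonneg _) zero_le_one
      _ = ‖x‖ := one_mul _

lemma aux_sa {H : Type*} [NormedAddCommGroup H] [InnerProductSpace ℂ H] [CompleteSpace H]
    (T A : H →L[ℂ] H)
    (hA : ∀ x, Tendsto (fun n : ℕ => (adjoint (T ^ n)) ((T ^ n) x)) atTop (𝓝 (A x))) :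
    IsSelfAdjoint A := by
  rw [ContinuousLinearMap.isSelfAdjoint_iff_isSymmetric]
  intro x y
  have h1 : Tendsto (fun n : ℕ => ⟪(adjoint (T ^ n)) ((T ^ n) x), y⟫) atTop (𝓝 ⟪A x, y⟫) :=
    (hA x).inner tendsto_const_nhds
  have h2 : Tendsto (fun n : ℕ => ⟪x, (adjoint (T ^ n)) ((T ^ n) y)⟫) atTop (𝓝 ⟪x, A y⟫) :=
    tendsto_const_nhds.inner (hA y)
  refine tendsto_nhds_unique (h1.congr fun n => ?_) h2
  rw [adjoint_inner_left, adjoint_inner_right]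

lemma aux_lim {H : Type*} [NormedAddCommGroup H] [InnerProductSpace ℂ H] [CompleteSpace H]
    (T A : H →L[ℂ] H)
    (hA : ∀ x, Tendsto (fun n : ℕ => (adjoint (T ^ n)) ((T ^ n) x)) atTop (𝓝 (A x))) (x : H) :
    Tendsto (fun n : ℕ => ‖(T ^ n) x‖ ^ 2) atTop (𝓝 (Complex.re ⟪A x, x⟫)) := by
  have h : Tendsto (fun n : ℕ => Complex.re ⟪(adjoint (T ^ n)) ((T ^ n) x), x⟫) atTop
      (𝓝 (Complex.re ⟪A x, x⟫)) :=
    (Complex.continuous_re.tendsto _).comp ((hA x).inner tendsto_const_nhds)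
  refine h.congr fun n => ?_
  rw [adjoint_inner_left]
  rw [show (inner ℂ ((T ^ n) x) ((T ^ n) x) : ℂ).re = RCLike.re (inner ℂ ((T ^ n) x) ((T ^ n) x) : ℂ) from rfl]
  exact inner_self_eq_norm_sq _

/-- If `T₁` and `T₂` are commuting contractions with asymptotic limits `A₁`, `A₂`,
and `A₁₂` is the asymptotic limit of `T₁T₂`, then `A₁₂ ≤ A₁` and `A₁₂ ≤ A₂`. -/
theorem stmt7 {H : Type*} [NormedAddCommGroup H] [InnerProductSpace ℂ H] [CompleteSpace H]
    (T₁ T₂ : H →L[ℂ] H) (hT₁ : ‖T₁‖ ≤ 1) (hT₂ : ‖T₂‖ ≤ 1) (hcomm : T₁ * T₂ = T₂ * T₁)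
    (A₁ A₂ A₁₂ : H →L[ℂ] H)
    (hA₁ : ∀ x, Tendsto (fun n : ℕ => (ContinuousLinearMap.adjoint (T₁ ^ n)) ((T₁ ^ n) x))
      atTop (𝓝 (A₁ x)))
    (hA₂ : ∀ x, Tendsto (fun n : ℕ => (ContinuousLinearMap.adjoint (T₂ ^ n)) ((T₂ ^ n) x))
      atTop (𝓝 (A₂ x)))
    (hA₁₂ : ∀ x, Tendsto
      (fun n : ℕ => (ContinuousLinearMap.adjoint ((T₁ * T₂) ^ n)) (((T₁ * T₂) ^ n) x))
      atTop (𝓝 (A₁₂ x))) :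
    (A₁ - A₁₂).IsPositive ∧ (A₂ - A₁₂).IsPositive := by
  have hC : Commute T₁ T₂ := hcomm
  have sa1 := aux_sa T₁ A₁ hA₁
  have sa2 := aux_sa T₂ A₂ hA₂
  have sa12 := aux_sa (T₁ * T₂) A₁₂ hA₁₂
  have key : ∀ (T A : H →L[ℂ] H),
      (∀ x, Tendsto (fun n : ℕ => (adjoint (T ^ n)) ((T ^ n) x)) atTop (𝓝 (A x))) →
      (∀ n x, ‖((T₁ * T₂) ^ n) x‖ ≤ ‖(T ^ n) x‖) →
      (A - A₁₂).IsPositive := by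
    intro T A hA hle
    refine ⟨ContinuousLinearMap.isSelfAdjoint_iff_isSymmetric.mp ((aux_sa T A hA).sub sa12), fun x => ?_⟩
    have hlim : Tendsto (fun n : ℕ => ‖(T ^ n) x‖ ^ 2 - ‖((T₁ * T₂) ^ n) x‖ ^ 2) atTop
        (𝓝 (Complex.re ⟪A x, x⟫ - Complex.re ⟪A₁₂ x, x⟫)) :=
      (aux_lim T A hA x).sub (aux_lim (T₁ * T₂) A₁₂ hA₁₂ x)
    have hnn : 0 ≤ Complex.re ⟪A x, x⟫ - Complex.re ⟪A₁₂ x, x⟫ := by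
      refine ge_of_tendsto' hlim fun n => ?_
      have := hle n x
      nlinarith [norm_nonneg (((T₁ * T₂) ^ n) x), norm_nonneg ((T ^ n) x)]
    have : reApplyInnerSelf (A - A₁₂) x = Complex.re ⟪A x, x⟫ - Complex.re ⟪A₁₂ x, x⟫ := by
      simp [reApplyInnerSelf, ContinuousLinearMap.sub_apply, inner_sub_left]
    rw [this]
    exact hnn
  constructor
  · refine key T₁ A₁ hA₁ fun n x => ?_
    have h : ((T₁ * T₂) ^ n) x = (T₂ ^ n) ((T₁ ^ n) x) := by
      rw [hcomm, hC.symm.mul_pow]; rfl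
    rw [h]
    exact aux_pow_norm T₂ hT₂ n _
  · refine key T₂ A₂ hA₂ fun n x => ?_
    have h : ((T₁ * T₂) ^ n) x = (T₁ ^ n) ((T₂ ^ n) x) := by
      rw [hC.mul_pow]; rfl
    rw [h]
    exact aux_pow_norm T₁ hT₁ n _
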